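/- arXiv:2409.04972 — 2 statements merged into one kernel-verified Lean document; each statement's English description precedes it below -/
import Mathlib

section
/- Sequential composition: if mechanism R₁ satisfies (ε₁, δ₁)-differential privacy and mechanism R₂ satisfies (ε₂, δ₂)-differential privacy, then the mechanism that releases the pair (R₁(D), R₂(D)) (run independently) satisfies (ε₁ + ε₂, δ₁ + δ₂)-differential privacy. -/
open MeasureTheory ENNReal

def DiffPrivate {D O : Type*} [MeasurableSpace O] (adj : D → D → Prop)
    (R : D → Measure O) (ε δ : ℝ) : Prop :=
  ∀ d d', adj d d' → ∀ s : Set O, MeasurableSet s →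
    R d s ≤ ENNReal.ofReal (Real.exp ε) * R d' s + ENNReal.ofReal δ

open Set in
/-- Key lemma: an `(ε,δ)`-style inequality between probability measures on all
measurable sets extends to integrals of measurable functions bounded by `1`,
via the layer-cake formula. -/
lemma lintegral_le_of_dp {O : Type*} [MeasurableSpace O] (μ ν : Measure O)
    [IsProbabilityMeasure μ] [IsProbabilityMeasure ν] {ε δ : ℝ} (hδ : 0 ≤ δ)
    (h : ∀ s : Set O, MeasurableSet s → μ s ≤ ENNReal.ofReal (Real.exp ε) * ν s + ENNReal.ofReal δ)
    (f : O → ℝ≥0∞) (hf : Measurable f) (hf1 : ∀ x, f x ≤ 1) :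
    ∫⁻ x, f x ∂μ ≤ ENNReal.ofReal (Real.exp ε) * ∫⁻ x, f x ∂ν + ENNReal.ofReal δ := by
  set F : O → ℝ := fun x => (f x).toReal with hF
  have hFm : Measurable F := hf.ennreal_toReal
  have hfne : ∀ x, f x ≠ ∞ := fun x => ne_top_of_le_ne_top ENNReal.one_ne_top (hf1 x)
  have hFnn : ∀ x, 0 ≤ F x := fun x => ENNReal.toReal_nonneg
  have hofF : ∀ x, ENNReal.ofReal (F x) = f x := fun x => ENNReal.ofReal_toReal (hfne x)
  have hlayer : ∀ (m : Measure O), ∫⁻ x, f x ∂m = ∫⁻ t in Ioi (0:ℝ), m {a | t < F a} := by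
    intro m
    rw [← lintegral_eq_lintegral_meas_lt m (Filter.Eventually.of_forall hFnn) hFm.aemeasurable]
    exact lintegral_congr fun x => (hofF x).symm
  have hsetm : ∀ t : ℝ, MeasurableSet {a | t < F a} := fun t => measurableSet_lt measurable_const hFm
  have hempty : ∀ t : ℝ, 1 ≤ t → {a | t < F a} = (∅ : Set O) := by
    intro t ht
    ext a
    simp only [mem_setOf_eq, mem_empty_iff_false, iff_false, not_lt]
    have : F a ≤ 1 := by
      rw [hF]
      simpa using ENNReal.toReal_mono ENNReal.one_ne_top (hf1 a)
    linarith
  have hsplit : ∀ (m : Measure O),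
      ∫⁻ t in Ioi (0:ℝ), m {a | t < F a} = ∫⁻ t in Ioo (0:ℝ) 1, m {a | t < F a} := by
    intro m
    have hU : Ioi (0:ℝ) = Ioo (0:ℝ) 1 ∪ Ici (1:ℝ) := by
      ext t; simp only [mem_Ioi, mem_union, mem_Ioo, mem_Ici]; constructor
      · intro ht; rcases lt_or_ge t 1 with h1 | h1
        · exact Or.inl ⟨ht, h1⟩
        · exact Or.inr h1
      · rintro (⟨h, _⟩ | h) <;> linarith
    have hdisj : Disjoint (Ioo (0:ℝ) 1) (Ici (1:ℝ)) := by
      rw [Set.disjoint_left]; rintro t ⟨_, h1⟩ h2; simp only [mem_Ici] at h2; linarith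
    rw [hU, lintegral_union measurableSet_Ici hdisj]
    have : ∫⁻ t in Ici (1:ℝ), m {a | t < F a} = ∫⁻ _t in Ici (1:ℝ), (0:ℝ≥0∞) := by
      apply setLIntegral_congr_fun measurableSet_Ici
      intro t ht
      simp only [mem_Ici] at ht
      simp [hempty t ht]
    rw [this, lintegral_zero, add_zero]
  calc ∫⁻ x, f x ∂μ = ∫⁻ t in Ioo (0:ℝ) 1, μ {a | t < F a} := by rw [hlayer, hsplit]
    _ ≤ ∫⁻ t in Ioo (0:ℝ) 1, (ENNReal.ofReal (Real.exp ε) * ν {a | t < F a} + ENNReal.ofReal δ) :=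
        lintegral_mono fun t => h _ (hsetm t)
    _ = ENNReal.ofReal (Real.exp ε) * (∫⁻ t in Ioo (0:ℝ) 1, ν {a | t < F a})
          + ENNReal.ofReal δ * volume (Ioo (0:ℝ) 1) := by
        rw [lintegral_add_right _ measurable_const, lintegral_const,
          lintegral_const_mul' _ _ ENNReal.ofReal_ne_top,
          Measure.restrict_apply MeasurableSet.univ, Set.univ_inter]
    _ = ENNReal.ofReal (Real.exp ε) * (∫⁻ x, f x ∂ν) + ENNReal.ofReal δ := by
        rw [hlayer, hsplit, Real.volume_Ioo, show ((1:ℝ)-0) = 1 by norm_num,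
          ENNReal.ofReal_one, mul_one]

/-- Sequential composition: if `R₁` is `(ε₁, δ₁)`-DP and `R₂` is `(ε₂, δ₂)`-DP,
then the mechanism releasing the independent pair `(R₁(D), R₂(D))` is
`(ε₁ + ε₂, δ₁ + δ₂)`-DP. -/
theorem dp_seq_composition {D O₁ O₂ : Type*} [MeasurableSpace O₁] [MeasurableSpace O₂]
    (adj : D → D → Prop) (R₁ : D → Measure O₁) (R₂ : D → Measure O₂)
    [∀ d, IsProbabilityMeasure (R₁ d)] [∀ d, IsProbabilityMeasure (R₂ d)]
    {ε₁ δ₁ ε₂ δ₂ : ℝ} (hε₁ : 0 ≤ ε₁) (hδ₁ : 0 ≤ δ₁) (hε₂ : 0 ≤ ε₂) (hδ₂ : 0 ≤ δ₂)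
    (h₁ : DiffPrivate adj R₁ ε₁ δ₁) (h₂ : DiffPrivate adj R₂ ε₂ δ₂) :
    DiffPrivate adj (fun d => (R₁ d).prod (R₂ d)) (ε₁ + ε₂) (δ₁ + δ₂) := by
  intro d d' hadj s hs
  set f : O₁ → ℝ≥0∞ := fun x => R₂ d (Prod.mk x ⁻¹' s) with hfdef
  set f' : O₁ → ℝ≥0∞ := fun x => R₂ d' (Prod.mk x ⁻¹' s) with hf'def
  set g : O₁ → ℝ≥0∞ := fun x => min (ENNReal.ofReal (Real.exp ε₂) * f' x) 1 with hgdef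
  have hsec : ∀ x : O₁, MeasurableSet (Prod.mk x ⁻¹' s) := fun x => measurable_prodMk_left hs
  have hf'm : Measurable f' := measurable_measure_prodMk_left hs
  have hgm : Measurable g := (hf'm.const_mul _).min measurable_const
  have hg1 : ∀ x, g x ≤ 1 := fun x => min_le_right _ _
  have hfg : ∀ x, f x ≤ g x + ENNReal.ofReal δ₂ := by
    intro x
    have h1 : f x ≤ 1 := prob_le_one
    have h2 : f x ≤ ENNReal.ofReal (Real.exp ε₂) * f' x + ENNReal.ofReal δ₂ :=
      h₂ d d' hadj _ (hsec x)
    calc f x ≤ min (ENNReal.ofReal (Real.exp ε₂) * f' x + ENNReal.ofReal δ₂)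
          (1 + ENNReal.ofReal δ₂) := le_min h2 (h1.trans le_self_add)
      _ = g x + ENNReal.ofReal δ₂ := min_add_add_right _ _ _
  have hkey := lintegral_le_of_dp (R₁ d) (R₁ d') hδ₁ (fun t ht => h₁ d d' hadj t ht) g hgm hg1
  have hg' : ∫⁻ x, g x ∂(R₁ d') ≤ ENNReal.ofReal (Real.exp ε₂) * ∫⁻ x, f' x ∂(R₁ d') := by
    rw [← lintegral_const_mul' _ _ ENNReal.ofReal_ne_top]
    exact lintegral_mono fun x => min_le_left _ _
  calc ((R₁ d).prod (R₂ d)) s = ∫⁻ x, f x ∂(R₁ d) := Measure.prod_apply hs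
    _ ≤ ∫⁻ x, (g x + ENNReal.ofReal δ₂) ∂(R₁ d) := lintegral_mono hfg
    _ = (∫⁻ x, g x ∂(R₁ d)) + ENNReal.ofReal δ₂ := by
        rw [lintegral_add_right _ measurable_const, lintegral_const, measure_univ, mul_one]
    _ ≤ (ENNReal.ofReal (Real.exp ε₁) * (∫⁻ x, g x ∂(R₁ d')) + ENNReal.ofReal δ₁)
          + ENNReal.ofReal δ₂ := add_le_add_left hkey _
    _ ≤ (ENNReal.ofReal (Real.exp ε₁) *
          (ENNReal.ofReal (Real.exp ε₂) * ∫⁻ x, f' x ∂(R₁ d')) + ENNReal.ofReal δ₁)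
          + ENNReal.ofReal δ₂ := by gcongr
    _ = ENNReal.ofReal (Real.exp (ε₁ + ε₂)) * ((R₁ d').prod (R₂ d')) s
          + ENNReal.ofReal (δ₁ + δ₂) := by
        rw [Measure.prod_apply hs, Real.exp_add, ENNReal.ofReal_mul (Real.exp_nonneg _),
          ENNReal.ofReal_add hδ₁ hδ₂, mul_assoc, add_assoc]
end

section
/- The Gaussian mechanism satisfies (ε, δ)-differential privacy: if t : D → ℝ has sensitivity Δt and 0 < ε ≤ 1, 0 < δ < 1, then M(D) = t(D) + N(0, c²) with standard deviation c = Δt·√(2 ln(1.25/δ))/ε satisfies (ε, δ)-differential privacy. -/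
open MeasureTheory ProbabilityTheory

section GaussAux
open Real Set
open scoped NNReal ENNReal

private lemma gm_neg_map (v : ℝ≥0) (κ : ℝ) :
    gaussianReal 0 v (Set.Iio κ) = gaussianReal 0 v (Set.Ioi (-κ)) := by
  have h := gaussianReal_map_const_mul (μ := 0) (v := v) (-1)
  have h1 : (NNReal.mk ((-1:ℝ)^2) (sq_nonneg _) : ℝ≥0) = 1 := by ext; norm_num
  rw [h1, one_mul, mul_zero] at h
  conv_lhs => rw [← h]
  rw [Measure.map_apply (measurable_const_mul (-1:ℝ)) measurableSet_Iio]
  congr 1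
  ext x
  simp only [Set.mem_preimage, Set.mem_Iio, Set.mem_Ioi]
  constructor <;> intro <;> linarith

private lemma gm_shift_Ioi (μ : ℝ) (v : ℝ≥0) (κ : ℝ) :
    gaussianReal μ v (Set.Ioi (μ + κ)) = gaussianReal 0 v (Set.Ioi κ) := by
  have hmap := gaussianReal_map_add_const (μ := 0) (v := v) μ
  rw [zero_add] at hmap
  rw [← hmap, Measure.map_apply (measurable_add_const _) measurableSet_Ioi]
  congr 1
  ext x
  simp only [Set.mem_preimage, Set.mem_Ioi]
  constructor <;> intro <;> linarith

private lemma gm_shift_Iio (μ : ℝ) (v : ℝ≥0) (κ : ℝ) :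
    gaussianReal μ v (Set.Iio (μ + κ)) = gaussianReal 0 v (Set.Iio κ) := by
  have hmap := gaussianReal_map_add_const (μ := 0) (v := v) μ
  rw [zero_add] at hmap
  rw [← hmap, Measure.map_apply (measurable_add_const _) measurableSet_Iio]
  congr 1
  ext x
  simp only [Set.mem_preimage, Set.mem_Iio]
  constructor <;> intro <;> linarith

private lemma gm_half : (gaussianReal 0 1) (Set.Ioi (0:ℝ)) = 1/2 := by
  have h0 : gaussianReal 0 1 ({0} : Set ℝ) = 0 := by
    rw [gaussianReal_of_var_ne_zero _ one_ne_zero, withDensity_apply _ (measurableSet_singleton _)]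
    simp
  have hIic : gaussianReal 0 1 (Set.Iic (0:ℝ)) = gaussianReal 0 1 (Set.Ioi (0:ℝ)) := by
    rw [← Iio_union_right, measure_union (by simp) (measurableSet_singleton _), h0, add_zero,
      gm_neg_map]
    norm_num
  have huniv : gaussianReal 0 1 (Set.Iic (0:ℝ)) + gaussianReal 0 1 (Set.Ioi (0:ℝ)) = 1 := by
    rw [← measure_union (by simp [Set.disjoint_left]) measurableSet_Ioi, Set.Iic_union_Ioi,
      measure_univ]
  rw [hIic, ← two_mul] at huniv
  exact (ENNReal.eq_div_iff two_ne_zero ENNReal.ofNat_ne_top).mpr huniv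

private lemma gm_tail {t : ℝ} (ht : 0 ≤ t) :
    gaussianReal 0 1 (Set.Ioi t) ≤ ENNReal.ofReal (Real.exp (-t^2/2) / 2) := by
  have hmap := gaussianReal_map_add_const (μ := 0) (v := 1) (-t)
  have hshift : gaussianReal 0 1 (Set.Ioi t) = gaussianReal (-t) 1 (Set.Ioi 0) := by
    rw [zero_add] at hmap
    rw [← hmap, Measure.map_apply (measurable_add_const _) measurableSet_Ioi]
    congr 1
    ext x
    simp only [Set.mem_preimage, Set.mem_Ioi]
    constructor <;> intro <;> linarith
  rw [hshift, gaussianReal_apply _ one_ne_zero]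
  have hpt : ∀ x ∈ Set.Ioi (0:ℝ), gaussianPDF (-t) 1 x
      ≤ ENNReal.ofReal (Real.exp (-t^2/2)) * gaussianPDF 0 1 x := by
    intro x hx
    simp only [Set.mem_Ioi] at hx
    rw [gaussianPDF, gaussianPDF, ← ENNReal.ofReal_mul (Real.exp_nonneg _)]
    apply ENNReal.ofReal_le_ofReal
    rw [gaussianPDFReal, gaussianPDFReal]
    have key : rexp (-(x - -t) ^ 2 / (2 * (1:ℝ≥0))) ≤ rexp (-t^2/2) * rexp (-(x - 0) ^ 2 / (2 * (1:ℝ≥0))) := by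
      rw [← Real.exp_add]
      apply Real.exp_le_exp.mpr
      push_cast
      nlinarith [mul_nonneg (le_of_lt hx) ht]
    calc (√(2 * π * ((1:ℝ≥0):ℝ)))⁻¹ * rexp (-(x - -t) ^ 2 / (2 * (1:ℝ≥0)))
        ≤ (√(2 * π * ((1:ℝ≥0):ℝ)))⁻¹ * (rexp (-t^2/2) * rexp (-(x - 0) ^ 2 / (2 * (1:ℝ≥0)))) :=
          mul_le_mul_of_nonneg_left key (by positivity)
      _ = rexp (-t^2/2) * ((√(2 * π * ((1:ℝ≥0):ℝ)))⁻¹ * rexp (-(x - 0) ^ 2 / (2 * (1:ℝ≥0)))) := by ring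
  calc ∫⁻ x in Set.Ioi (0:ℝ), gaussianPDF (-t) 1 x
      ≤ ∫⁻ x in Set.Ioi (0:ℝ), ENNReal.ofReal (Real.exp (-t^2/2)) * gaussianPDF 0 1 x :=
        setLIntegral_mono ((measurable_gaussianPDF 0 1).const_mul _) hpt
    _ = ENNReal.ofReal (Real.exp (-t^2/2)) * ∫⁻ x in Set.Ioi (0:ℝ), gaussianPDF 0 1 x := by
        rw [lintegral_const_mul _ (measurable_gaussianPDF _ _)]
    _ = ENNReal.ofReal (Real.exp (-t^2/2)) * gaussianReal 0 1 (Set.Ioi 0) := by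
        rw [gaussianReal_apply _ one_ne_zero]
    _ = ENNReal.ofReal (Real.exp (-t^2/2) / 2) := by
        rw [gm_half, ENNReal.ofReal_div_of_pos two_pos, ENNReal.ofReal_ofNat,
          ENNReal.div_eq_inv_mul, mul_one, mul_comm]
        rw [ENNReal.div_eq_inv_mul]

end GaussAux

section GaussAux2
open Real Set
open scoped NNReal ENNReal

set_option maxHeartbeats 1000000 in
private lemma gm_stdtail {ε δ : ℝ} (hε0 : 0 < ε) (hε1 : ε ≤ 1) (hδ0 : 0 < δ) (hδ1 : δ < 1) :
    gaussianReal 0 1 (Set.Ioi (Real.sqrt (2 * Real.log (1.25/δ))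
      - ε / (2 * Real.sqrt (2 * Real.log (1.25/δ))))) ≤ ENNReal.ofReal δ := by
  set L := Real.log (1.25/δ) with hLdef
  have hq : (1:ℝ) < 1.25/δ := by rw [lt_div_iff₀ hδ0]; linarith
  have hqpos : (0:ℝ) < 1.25/δ := by linarith
  have hL5 : (1/5 : ℝ) ≤ L := by
    have h := Real.one_sub_inv_le_log_of_pos hqpos
    rw [inv_div] at h
    rw [hLdef]
    have : δ / 1.25 ≤ 1 / 1.25 := by
      rw [div_le_div_iff₀ (by norm_num) (by norm_num)]
      linarith
    linarith
  have hLpos : 0 < L := by linarith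
  have hS : 0 < Real.sqrt (2*L) := Real.sqrt_pos.mpr (by linarith)
  set S := Real.sqrt (2*L) with hSdef
  have hS2 : S^2 = 2*L := Real.sq_sqrt (by linarith)
  have hexpL : Real.exp (-L) = δ / 1.25 := by
    rw [Real.exp_neg, Real.exp_log hqpos]
    rw [inv_div]
  set τ := S - ε/(2*S) with hτdef
  clear_value L
  clear_value S
  clear_value τ
  have hehalf : Real.exp (1/2 : ℝ) ≤ 2.5 := by
    nlinarith [Real.exp_one_lt_d9, Real.exp_pos (1/2:ℝ),
      (Real.exp_add (1/2) (1/2)).symm, Real.exp_nonneg (1/2:ℝ)]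
  by_cases hτ : 0 ≤ τ
  · refine (gm_tail hτ).trans (ENNReal.ofReal_le_ofReal ?_)
    have hSc : S * (ε/(2*S)) = ε/2 := by field_simp
    have hτ2 : 2*L - ε ≤ τ^2 := by
      rw [hτdef]
      nlinarith [sq_nonneg (ε/(2*S))]
    have h1 : -τ^2/2 ≤ 1/2 - L := by linarith
    calc Real.exp (-τ^2/2) / 2 ≤ Real.exp (1/2 - L) / 2 := by
          have := Real.exp_le_exp.mpr h1
          linarith
      _ = Real.exp (1/2) * Real.exp (-L) / 2 := by rw [← Real.exp_add]; ring_nf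
      _ = Real.exp (1/2) * (δ/1.25) / 2 := by rw [hexpL]
      _ ≤ 2.5 * (δ/1.25) / 2 := by
          have hd : 0 ≤ δ/1.25 := by positivity
          nlinarith
      _ = δ := by ring
  · push_neg at hτ
    have hL4 : L < 1/4 := by
      have hlt : S^2 < ε/2 := by
        have h' : S < ε/(2*S) := by
          rw [hτdef] at hτ; linarith
        calc S^2 = S * S := sq S
          _ < (ε/(2*S)) * S := by nlinarith
          _ = ε/2 := by field_simp
      rw [hS2] at hlt; linarith
    have hSlb : (0.63:ℝ) ≤ S := by
      rw [hSdef]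
      rw [show (0.63:ℝ) = Real.sqrt (0.63^2) from (Real.sqrt_sq (by norm_num)).symm]
      apply Real.sqrt_le_sqrt
      nlinarith
    have hτub : -τ ≤ 0.794 := by
      have h1 : ε/(2*S) ≤ 1/(2*S) := by gcongr
      have h2 : 1/(2*S) ≤ 1/(2*0.63) := by gcongr
      rw [hτdef]
      have : (1:ℝ)/(2*0.63) ≤ 0.794 := by norm_num
      linarith
    -- split the measure
    have hsub : Set.Ioi τ ⊆ Set.Ioc τ 0 ∪ Set.Ioi 0 := by
      intro x hx
      simp only [Set.mem_Ioi] at hx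
      by_cases hx0 : x ≤ 0
      · exact Or.inl ⟨hx, hx0⟩
      · exact Or.inr (by simpa using lt_of_not_ge hx0)
    have hC : (Real.sqrt (2*π))⁻¹ ≤ 0.4 := by
      have h25 : (2.5:ℝ) ≤ Real.sqrt (2*π) := by
        rw [show (2.5:ℝ) = Real.sqrt (2.5^2) from (Real.sqrt_sq (by norm_num)).symm]
        apply Real.sqrt_le_sqrt
        nlinarith [Real.pi_gt_d6]
      rw [show (0.4:ℝ) = (2.5:ℝ)⁻¹ by norm_num]
      exact inv_anti₀ (by norm_num) h25
    have hIoc : gaussianReal 0 1 (Set.Ioc τ 0) ≤ ENNReal.ofReal ((Real.sqrt (2*π))⁻¹ * (-τ)) := by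
      rw [gaussianReal_apply _ one_ne_zero]
      calc ∫⁻ x in Set.Ioc τ 0, gaussianPDF 0 1 x
          ≤ ∫⁻ _ in Set.Ioc τ 0, ENNReal.ofReal ((Real.sqrt (2*π))⁻¹) := by
            apply setLIntegral_mono measurable_const
            intro x _
            rw [gaussianPDF]
            apply ENNReal.ofReal_le_ofReal
            rw [gaussianPDFReal]
            push_cast
            rw [mul_one]
            have he : rexp (-(x-0)^2/(2*(1:ℝ))) ≤ 1 := by
              rw [Real.exp_le_one_iff]
              nlinarith [sq_nonneg (x-0)]
            calc (√(2 * π))⁻¹ * rexp (-(x - 0) ^ 2 / (2 * (1:ℝ)))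
                ≤ (√(2 * π))⁻¹ * 1 := mul_le_mul_of_nonneg_left he (by positivity)
              _ = (√(2 * π))⁻¹ := mul_one _
        _ = ENNReal.ofReal ((Real.sqrt (2*π))⁻¹) * volume (Set.Ioc τ 0) := by
            rw [setLIntegral_const]
        _ = ENNReal.ofReal ((Real.sqrt (2*π))⁻¹ * (-τ)) := by
            rw [Real.volume_Ioc, ← ENNReal.ofReal_mul (by positivity)]
            ring_nf
    calc gaussianReal 0 1 (Set.Ioi τ)
        ≤ gaussianReal 0 1 (Set.Ioc τ 0 ∪ Set.Ioi 0) := measure_mono hsub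
      _ ≤ gaussianReal 0 1 (Set.Ioc τ 0) + gaussianReal 0 1 (Set.Ioi 0) := measure_union_le _ _
      _ ≤ ENNReal.ofReal ((Real.sqrt (2*π))⁻¹ * (-τ)) + ENNReal.ofReal (1/2) := by
          rw [gm_half]
          apply add_le_add hIoc
          rw [ENNReal.ofReal_div_of_pos two_pos, ENNReal.ofReal_one, ENNReal.ofReal_ofNat]
      _ = ENNReal.ofReal ((Real.sqrt (2*π))⁻¹ * (-τ) + 1/2) := by
          rw [ENNReal.ofReal_add (mul_nonneg (by positivity) (by linarith)) (by norm_num)]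
      _ ≤ ENNReal.ofReal δ := by
          apply ENNReal.ofReal_le_ofReal
          have hδlb : (0.9375:ℝ) ≤ δ := by
            have h1 : 1 - L ≤ Real.exp (-L) := by
              have := Real.add_one_le_exp (-L)
              linarith
            rw [hexpL] at h1
            norm_num at h1 ⊢
            nlinarith
          have hp1 : (Real.sqrt (2*π))⁻¹ * (-τ) ≤ 0.4 * 0.794 := by
            apply mul_le_mul hC hτub (by linarith) (by norm_num)
          nlinarith

end GaussAux2

section GaussAux3
open Real Set
open scoped NNReal ENNReal

set_option maxHeartbeats 1000000 in
private lemma gm_tailB {Δt ε δ b : ℝ} (hΔt : 0 < Δt) (hε0 : 0 < ε) (hε1 : ε ≤ 1)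
    (hδ0 : 0 < δ) (hδ1 : δ < 1) (hb0 : 0 < b) (hbΔ : b ≤ Δt) :
    gaussianReal 0 (Real.toNNReal ((Δt * Real.sqrt (2 * Real.log (1.25/δ)) / ε)^2))
      (Set.Ioi ((Δt * Real.sqrt (2 * Real.log (1.25/δ)) / ε)^2 * ε / b - b/2))
      ≤ ENNReal.ofReal δ := by
  have hq : (1:ℝ) < 1.25/δ := by rw [lt_div_iff₀ hδ0]; linarith
  have hLpos : 0 < Real.log (1.25/δ) := Real.log_pos hq
  set L := Real.log (1.25/δ) with hLdef
  have hS : 0 < Real.sqrt (2*L) := Real.sqrt_pos.mpr (by linarith)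
  set S := Real.sqrt (2*L) with hSdef
  have hS' : 0 < Real.sqrt (2*Real.log (1.25/δ)) := hS
  have hσ : 0 < Δt * S / ε := by positivity
  set σ := Δt * S / ε with hσdef
  have hmk : (NNReal.mk (σ^2) (sq_nonneg _) : ℝ≥0) * 1 = Real.toNNReal (σ^2) := by
    ext
    simp [Real.coe_toNNReal _ (sq_nonneg σ)]
  have hmap := gaussianReal_map_const_mul (μ := 0) (v := 1) σ
  rw [mul_zero, hmk] at hmap
  rw [← hmap, Measure.map_apply (measurable_const_mul σ) measurableSet_Ioi]
  have hpre : (fun x => σ * x) ⁻¹' (Set.Ioi (σ^2*ε/b - b/2))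
      = Set.Ioi ((σ^2*ε/b - b/2)/σ) := by
    ext x
    simp only [Set.mem_preimage, Set.mem_Ioi]
    rw [div_lt_iff₀ hσ]
    constructor <;> intro <;> linarith
  rw [hpre]
  have e3 : (σ^2*ε/b - b/2)/σ = σ*ε/b - b/(2*σ) := by
    field_simp
  have e1 : σ*ε/Δt = S := by rw [hσdef]; field_simp
  have e2 : Δt/(2*σ) = ε/(2*S) := by rw [hσdef]; field_simp
  have hτle : S - ε/(2*S) ≤ (σ^2*ε/b - b/2)/σ := by
    rw [e3]
    have i1 : σ*ε/Δt ≤ σ*ε/b := div_le_div_of_nonneg_left (by positivity) hb0 hbΔ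
    have i2 : b/(2*σ) ≤ Δt/(2*σ) := by gcongr
    rw [e1] at i1
    rw [e2] at i2
    linarith
  calc gaussianReal 0 1 (Set.Ioi ((σ^2*ε/b - b/2)/σ))
      ≤ gaussianReal 0 1 (Set.Ioi (S - ε/(2*S))) := measure_mono (Set.Ioi_subset_Ioi hτle)
    _ ≤ ENNReal.ofReal δ := gm_stdtail hε0 hε1 hδ0 hδ1

end GaussAux3

section GaussAux4
open Real Set
open scoped NNReal ENNReal

set_option maxHeartbeats 1000000 in
private lemma gm_measB {Δt ε δ : ℝ} (hΔt : 0 < Δt) (hε0 : 0 < ε) (hε1 : ε ≤ 1)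
    (hδ0 : 0 < δ) (hδ1 : δ < 1) (μ μ' : ℝ) (hsens : |μ - μ'| ≤ Δt) :
    gaussianReal μ (Real.toNNReal ((Δt * Real.sqrt (2 * Real.log (1.25/δ)) / ε)^2))
      {x : ℝ | 2 * (Δt * Real.sqrt (2 * Real.log (1.25/δ)) / ε)^2 * ε
        < (μ - μ') * (2*(x - μ) + (μ - μ'))} ≤ ENNReal.ofReal δ := by
  have hq : (1:ℝ) < 1.25/δ := by rw [lt_div_iff₀ hδ0]; linarith
  have hLpos : 0 < Real.log (1.25/δ) := Real.log_pos hq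
  have hS : 0 < Real.sqrt (2*Real.log (1.25/δ)) := Real.sqrt_pos.mpr (by linarith)
  have hσ : 0 < Δt * Real.sqrt (2*Real.log (1.25/δ)) / ε := by positivity
  set σ := Δt * Real.sqrt (2*Real.log (1.25/δ)) / ε with hσdef
  set a := μ - μ' with hadef
  clear_value a
  rcases lt_trichotomy a 0 with ha | ha | ha
  · -- a < 0 : set is Iio
    have hseteq : {x : ℝ | 2*σ^2*ε < a * (2*(x - μ) + a)}
        = Set.Iio (μ + (σ^2*ε/a - a/2)) := by
      ext x
      simp only [Set.mem_setOf_eq, Set.mem_Iio]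
      have ha0 : a ≠ 0 := ne_of_lt ha
      have hrepr : σ^2*ε/a - a/2 = (σ^2*ε - a^2/2)/a := by field_simp
      constructor
      · intro h
        have h4 : x - μ < (σ^2*ε - a^2/2)/a := (lt_div_iff_of_neg ha).mpr (by nlinarith)
        linarith [hrepr]
      · intro h
        have h4 : x - μ < (σ^2*ε - a^2/2)/a := by linarith [hrepr]
        have h5 := (lt_div_iff_of_neg ha).mp h4
        nlinarith
    rw [hseteq, gm_shift_Iio, gm_neg_map,
      show (-(σ^2*ε/a - a/2)) = σ^2*ε/(-a) - (-a)/2 by rw [div_neg]; ring]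
    exact gm_tailB hΔt hε0 hε1 hδ0 hδ1 (by linarith) (by rw [abs_le] at hsens; linarith)
  · -- a = 0 : set is empty
    have hseteq : {x : ℝ | 2*σ^2*ε < a * (2*(x - μ) + a)} = (∅ : Set ℝ) := by
      ext x
      simp only [Set.mem_setOf_eq, Set.mem_empty_iff_false, iff_false, not_lt, ha]
      nlinarith
    rw [hseteq]
    simp
  · -- a > 0 : set is Ioi
    have hseteq : {x : ℝ | 2*σ^2*ε < a * (2*(x - μ) + a)}
        = Set.Ioi (μ + (σ^2*ε/a - a/2)) := by
      ext x
      simp only [Set.mem_setOf_eq, Set.mem_Ioi]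
      have ha0 : a ≠ 0 := ne_of_gt ha
      have hrepr : σ^2*ε/a - a/2 = (σ^2*ε - a^2/2)/a := by field_simp
      constructor
      · intro h
        have h4 : (σ^2*ε - a^2/2)/a < x - μ := (div_lt_iff₀ ha).mpr (by nlinarith)
        linarith [hrepr]
      · intro h
        have h4 : (σ^2*ε - a^2/2)/a < x - μ := by linarith [hrepr]
        have h5 := (div_lt_iff₀ ha).mp h4
        nlinarith
    rw [hseteq, gm_shift_Ioi]
    exact gm_tailB hΔt hε0 hε1 hδ0 hδ1 ha (by rw [abs_le] at hsens; linarith)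

end GaussAux4

set_option maxHeartbeats 1000000 in
/-- The Gaussian mechanism `M(D) = t(D) + N(0, c²)` with
`c = Δt·√(2 ln(1.25/δ))/ε` is `(ε, δ)`-differentially private for
`0 < ε ≤ 1` and `0 < δ < 1`, when `t` has sensitivity `Δt`. -/
theorem gaussian_mechanism_dp {D : Type*} (adj : D → D → Prop) (t : D → ℝ)
    {Δt ε δ : ℝ} (hΔt : 0 < Δt) (hε0 : 0 < ε) (hε1 : ε ≤ 1)
    (hδ0 : 0 < δ) (hδ1 : δ < 1)
    (hsens : ∀ d d', adj d d' → |t d - t d'| ≤ Δt) :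
    DiffPrivate adj
      (fun d => gaussianReal (t d)
        (Real.toNNReal ((Δt * Real.sqrt (2 * Real.log (1.25 / δ)) / ε) ^ 2)))
      ε δ := by
  intro d d' hadj s hs
  simp only []
  have hq : (1:ℝ) < 1.25/δ := by rw [lt_div_iff₀ hδ0]; linarith
  have hLpos : 0 < Real.log (1.25/δ) := Real.log_pos hq
  have hS : 0 < Real.sqrt (2*Real.log (1.25/δ)) := Real.sqrt_pos.mpr (by linarith)
  have hσ : 0 < Δt * Real.sqrt (2*Real.log (1.25/δ)) / ε := by positivity
  set σ := Δt * Real.sqrt (2*Real.log (1.25/δ)) / ε with hσdef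
  have hv : (Real.toNNReal (σ^2)) ≠ 0 := by
    simp only [ne_eq, Real.toNNReal_eq_zero, not_le]
    positivity
  have hvcoe : ((Real.toNNReal (σ^2) : NNReal) : ℝ) = σ^2 := Real.coe_toNNReal _ (sq_nonneg σ)
  set B := {x : ℝ | 2*σ^2*ε < (t d - t d') * (2*(x - t d) + (t d - t d'))} with hBdef
  have hB : gaussianReal (t d) (Real.toNNReal (σ^2)) B ≤ ENNReal.ofReal δ :=
    gm_measB hΔt hε0 hε1 hδ0 hδ1 (t d) (t d') (hsens d d' hadj)
  have hpt : ∀ x ∈ s \ B, gaussianPDF (t d) (Real.toNNReal (σ^2)) x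
      ≤ ENNReal.ofReal (Real.exp ε) * gaussianPDF (t d') (Real.toNNReal (σ^2)) x := by
    intro x hx
    have hnot : (t d - t d') * (2*(x - t d) + (t d - t d')) ≤ 2*σ^2*ε := by
      have := hx.2
      rw [hBdef] at this
      simpa only [Set.mem_setOf_eq, not_lt] using this
    rw [gaussianPDF, gaussianPDF, ← ENNReal.ofReal_mul (le_of_lt (Real.exp_pos ε))]
    apply ENNReal.ofReal_le_ofReal
    rw [gaussianPDFReal, gaussianPDFReal, hvcoe]
    have h2σ : (0:ℝ) < 2*σ^2 := by positivity
    have key : (x - t d')^2 - (x - t d)^2 ≤ 2*σ^2*ε := by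
      have hid : (x - t d')^2 - (x - t d)^2
          = (t d - t d') * (2*(x - t d) + (t d - t d')) := by ring
      linarith
    have hediff : -(x - t d)^2/(2*σ^2) ≤ ε + -(x - t d')^2/(2*σ^2) := by
      have frac : ε + -(x - t d')^2/(2*σ^2) - (-(x - t d)^2/(2*σ^2))
          = (2*σ^2*ε - ((x - t d')^2 - (x - t d)^2))/(2*σ^2) := by
        field_simp
        ring
      have hnn : 0 ≤ (2*σ^2*ε - ((x - t d')^2 - (x - t d)^2))/(2*σ^2) :=
        div_nonneg (by linarith) (by positivity)
      linarith
    calc (Real.sqrt (2*Real.pi*σ^2))⁻¹ * Real.exp (-(x - t d)^2/(2*σ^2))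
        ≤ (Real.sqrt (2*Real.pi*σ^2))⁻¹ * (Real.exp ε * Real.exp (-(x - t d')^2/(2*σ^2))) := by
          apply mul_le_mul_of_nonneg_left _ (by positivity)
          rw [← Real.exp_add]
          exact Real.exp_le_exp.mpr hediff
      _ = Real.exp ε * ((Real.sqrt (2*Real.pi*σ^2))⁻¹ * Real.exp (-(x - t d')^2/(2*σ^2))) := by
          ring
  have hBmeas : MeasurableSet B :=
    measurableSet_lt measurable_const
      ((((measurable_id.sub_const (t d)).const_mul 2).add_const (t d - t d')).const_mul
        (t d - t d'))
  have hmain : gaussianReal (t d) (Real.toNNReal (σ^2)) (s \ B)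
      ≤ ENNReal.ofReal (Real.exp ε) * gaussianReal (t d') (Real.toNNReal (σ^2)) s := by
    rw [gaussianReal_apply _ hv]
    calc ∫⁻ x in s \ B, gaussianPDF (t d) (Real.toNNReal (σ^2)) x
        ≤ ∫⁻ x in s \ B, ENNReal.ofReal (Real.exp ε)
            * gaussianPDF (t d') (Real.toNNReal (σ^2)) x :=
          setLIntegral_mono ((measurable_gaussianPDF _ _).const_mul _) hpt
      _ = ENNReal.ofReal (Real.exp ε)
            * ∫⁻ x in s \ B, gaussianPDF (t d') (Real.toNNReal (σ^2)) x :=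
          lintegral_const_mul _ (measurable_gaussianPDF _ _)
      _ ≤ ENNReal.ofReal (Real.exp ε)
            * gaussianReal (t d') (Real.toNNReal (σ^2)) s := by
          apply mul_le_mul_right
          rw [gaussianReal_apply _ hv]
          exact lintegral_mono_set Set.diff_subset
  calc gaussianReal (t d) (Real.toNNReal (σ^2)) s
      ≤ gaussianReal (t d) (Real.toNNReal (σ^2)) ((s \ B) ∪ B) := by
        apply measure_mono
        intro x hx
        by_cases hxB : x ∈ B
        · exact Or.inr hxB
        · exact Or.inl ⟨hx, hxB⟩
    _ ≤ gaussianReal (t d) (Real.toNNReal (σ^2)) (s \ B)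
        + gaussianReal (t d) (Real.toNNReal (σ^2)) B := measure_union_le _ _
    _ ≤ ENNReal.ofReal (Real.exp ε) * gaussianReal (t d') (Real.toNNReal (σ^2)) s
        + ENNReal.ofReal δ := add_le_add hmain hB
end
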